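/- Let b ≥ 1 and d ≥ 1 be integers, let G be the butterfly graph of degree b and depth d, and let H be a subgraph of G (i.e., a directed graph on the same vertex set whose edge set is a subset of the edge set of G). Then for every s, t ∈ [b]^d, the sink (d, t) is reachable from the source (0, s) by a directed path in H if and only if for every i ∈ {0, 1, …, d−1} the edge from (i, (t_1, …, t_i, s_{i+1}, …, s_d)) to (i+1, (t_1, …, t_{i+1}, s_{i+2}, …, s_d)) belongs to H. -/

import Mathlib

/-- Vertices of the butterfly graph of degree `b` and depth `d`: pairs `(i, r)`
of a level `i ∈ {0, …, d}` and a vector `r ∈ [b]^d` (coordinate `j + 1` of the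
vector is modeled by the index `j : Fin d`). -/
abbrev BVert (b d : ℕ) := ℕ × (Fin d → Fin b)

/-- The edge relation of the butterfly graph of degree `b` and depth `d`: there
is an edge from `(i, r)` to `(i + 1, p)` (with `i + 1 ≤ d`) whenever `r` and `p`
agree on all coordinates other than the `(i+1)`-st one (which is modeled by the
index `i : Fin d`). -/
def butterflyEdge (b d : ℕ) (u v : BVert b d) : Prop :=
  v.1 = u.1 + 1 ∧ v.1 ≤ d ∧ ∀ j : Fin d, (j : ℕ) ≠ u.1 → u.2 j = v.2 j

/-- `p` is a directed path from `u` to `v` with respect to the edge relation `E`: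
a nonempty sequence of vertices starting at `u`, ending at `v`, with each
consecutive pair joined by an edge. -/
def IsDiPath {V : Type*} (E : V → V → Prop) (u v : V) (p : List V) : Prop :=
  p.head? = some u ∧ p.getLast? = some v ∧ p.Chain' E

lemma bf_mono {b d : ℕ} {E : BVert b d → BVert b d → Prop}
    (hE : ∀ u v, E u v → butterflyEdge b d u v) :
    ∀ (p : List (BVert b d)) (u v : BVert b d), p.Chain' E → p.head? = some u →
      p.getLast? = some v → u.1 ≤ v.1 ∧ ∀ j : Fin d, (j : ℕ) < u.1 → u.2 j = v.2 j := by
  intro p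
  induction p with
  | nil => simp
  | cons x tl ih =>
    intro u v hc hh hl
    simp only [List.head?_cons, Option.some.injEq] at hh
    subst hh
    match tl, hc, hl with
    | [], _, hl =>
      simp only [List.getLast?_singleton, Option.some.injEq] at hl
      subst hl
      exact ⟨le_refl _, fun _ _ => rfl⟩
    | y :: rest, hc, hl =>
      rw [show List.Chain' _ _ = List.IsChain _ _ from rfl, List.isChain_cons_cons] at hc
      obtain ⟨hxy, hc'⟩ := hc
      have hl' : (y :: rest).getLast? = some v := by rwa [List.getLast?_cons_cons] at hl
      obtain ⟨h1, h2⟩ := ih y v hc' rfl hl'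
      obtain ⟨e1, e2, e3⟩ := hE _ _ hxy
      refine ⟨by omega, fun j hj => ?_⟩
      rw [e3 j (by omega), h2 j (by omega)]

lemma bf_fwd {b d : ℕ} (H : BVert b d → BVert b d → Prop)
    (hH : ∀ u v, H u v → butterflyEdge b d u v) (s t : Fin d → Fin b) :
    ∀ (p : List (BVert b d)) (i : ℕ),
      IsDiPath H (i, fun j : Fin d => if (j : ℕ) < i then t j else s j) (d, t) p →
      ∀ k, i ≤ k → k < d →
        H (k, fun j : Fin d => if (j : ℕ) < k then t j else s j)
          (k + 1, fun j : Fin d => if (j : ℕ) < k + 1 then t j else s j) := by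
  intro p
  induction p with
  | nil => intro i hp; simp [IsDiPath] at hp
  | cons x tl ih =>
    intro i hp k hik hkd
    obtain ⟨hh, hl, hc⟩ := hp
    simp only [List.head?_cons, Option.some.injEq] at hh
    subst hh
    match tl, hc, hl with
    | [], _, hl =>
      simp only [List.getLast?_singleton, Option.some.injEq] at hl
      have : i = d := congrArg Prod.fst hl
      omega
    | y :: rest, hc, hl =>
      rw [show List.Chain' _ _ = List.IsChain _ _ from rfl, List.isChain_cons_cons] at hc
      obtain ⟨hxy, hc'⟩ := hc
      have hl' : (y :: rest).getLast? = some (d, t) := by rwa [List.getLast?_cons_cons] at hl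
      obtain ⟨e1, e2, e3⟩ := hH _ _ hxy
      obtain ⟨m1, m2⟩ := bf_mono hH (y :: rest) y (d, t) hc' rfl hl'
      have hy : y = (i + 1, fun j : Fin d => if (j : ℕ) < i + 1 then t j else s j) := by
        obtain ⟨y1, y2⟩ := y
        simp only at e1
        subst e1
        refine Prod.ext rfl ?_
        funext j
        show y2 j = if (j : ℕ) < i + 1 then t j else s j
        by_cases hj : (j : ℕ) < i + 1
        · rw [if_pos hj]
          exact m2 j (by simpa using hj)
        · rw [if_neg hj]
          have := e3 j (by simp; omega)
          simp only at this
          rw [← this, if_neg (by omega)]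
      subst hy
      rcases eq_or_lt_of_le hik with rfl | hlt
      · exact hxy
      · exact ih (i + 1) ⟨rfl, hl', hc'⟩ k (by omega) hkd

/-- Let `H` be a subgraph of the butterfly graph of degree `b ≥ 1` and depth
`d ≥ 1`. The sink `(d, t)` is reachable from the source `(0, s)` by a directed
path in `H` if and only if, for every `i ∈ {0, …, d - 1}`, the edge from
`(i, (t_1, …, t_i, s_{i+1}, …, s_d))` to `(i + 1, (t_1, …, t_{i+1}, s_{i+2}, …, s_d))`
belongs to `H`. -/
theorem butterfly_reachability (b d : ℕ) (hb : 1 ≤ b) (hd : 1 ≤ d)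
    (H : BVert b d → BVert b d → Prop)
    (hH : ∀ u v, H u v → butterflyEdge b d u v)
    (s t : Fin d → Fin b) :
    (∃ p : List (BVert b d), IsDiPath H (0, s) (d, t) p) ↔
      ∀ i < d, H (i, fun j : Fin d => if (j : ℕ) < i then t j else s j)
                 (i + 1, fun j : Fin d => if (j : ℕ) < i + 1 then t j else s j) := by
  constructor
  · rintro ⟨p, hp⟩ i hi
    have hs : (fun j : Fin d => if (j : ℕ) < 0 then t j else s j) = s := by
      funext j; simp
    rw [← hs] at hp
    exact bf_fwd H hH s t p 0 hp i (Nat.zero_le _) hi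
  · intro h
    set f : ℕ → BVert b d := fun i => (i, fun j : Fin d => if (j : ℕ) < i then t j else s j)
      with hf
    have hf0 : f 0 = ((0 : ℕ), s) := by
      refine Prod.ext rfl ?_
      funext j
      show (if (j : ℕ) < 0 then t j else s j) = s j
      exact if_neg (Nat.not_lt_zero _)
    have hfd : f d = ((d : ℕ), t) := by
      refine Prod.ext rfl ?_
      funext j
      show (if (j : ℕ) < d then t j else s j) = t j
      exact if_pos j.isLt
    refine ⟨(List.range (d + 1)).map f, ?_, ?_, ?_⟩
    · rw [List.range_succ_eq_map, List.map_cons, List.head?_cons, hf0]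
    · rw [List.range_succ, List.map_append, List.map_singleton, List.getLast?_concat, hfd]
    · rw [show List.Chain' _ _ = List.IsChain _ _ from rfl, List.isChain_map, List.isChain_range_succ]
      intro m hm
      exact h m hm
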